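/- Contrapositive of the congruence lemma: if L ⊆ Σ^ω is not ω-regular, then for every function f : Σ* → F into a finite set F there exists a sequence of finite words u_1, u_2, … such that exactly one of the two ω-words u_1 u_2 ⋯ and f-representative substitution f(u_1)-class representatives u_1' u_2' ⋯ (with f(u_i) = f(u_i')) is in L; concretely, there exist sequences (u_i), (u_i') with f(u_i) = f(u_i') for all i and u_1 u_2 ⋯ ∈ L but u_1' u_2' ⋯ ∉ L. -/

import Mathlib

open Filter

variable {A : Type*}

/-- The interval coded by `p` occupies positions `p.1, …, p.1 + p.2 - 1` (length `p.2 > 0`). -/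
def IntervalLt (p q : ℕ × ℕ) : Prop := p.1 + p.2 ≤ q.1

def IntervalDisj (p q : ℕ × ℕ) : Prop := p.1 + p.2 ≤ q.1 ∨ q.1 + q.2 ≤ p.1

def prefixList (u : ℕ → List A) (m : ℕ) : List A := (List.range m).flatMap u

/-- Prepending a finite word to an ω-word. -/
def prepend (w : List A) (x : ℕ → A) : ℕ → A := fun n =>
  if h : n < w.length then w.get ⟨n, h⟩ else x (n - w.length)

open Classical in
/-- The infinite concatenation `u 0 · u 1 · u 2 ⋯` of a sequence of finite words, as an
ω-word; meaningful when infinitely many of the `u i` are nonempty. -/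
noncomputable def omegaConcat [Inhabited A] (u : ℕ → List A) : ℕ → A := fun n =>
  if h : ∃ m, n < (prefixList u m).length
  then (prefixList u (Nat.find h)).getD n default
  else default

/-- The ω-power `v^ω` of a finite word; meaningful when `v ≠ []`. -/
noncomputable def omegaPow [Inhabited A] (v : List A) : ℕ → A := fun n =>
  v.getD (n % v.length) default

/-- Infinitely many of the words `u i` are nonempty. -/
def InfOftenNonempty (u : ℕ → List A) : Prop := ∀ n, ∃ m, n ≤ m ∧ u m ≠ []

/-- A relation on finite words has finite index (finitely many classes). -/
def FiniteIndex (r : List A → List A → Prop) : Prop :=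
  (Set.range fun w => {v | r w v}).Finite

/-- Compatibility with concatenation. -/
def ConcatCongr (r : List A → List A → Prop) : Prop :=
  ∀ u₁ u₁' u₂ u₂' : List A, r u₁ u₁' → r u₂ u₂' → r (u₁ ++ u₂) (u₁' ++ u₂')

/-- The relation `r` recognizes `L`: relating the blocks of two infinite concatenations
pointwise preserves membership in `L`. -/
def Recognizes [Inhabited A] (r : List A → List A → Prop) (L : Set (ℕ → A)) : Prop :=
  ∀ u u' : ℕ → List A, InfOftenNonempty u → InfOftenNonempty u' →
    (∀ i, r (u i) (u' i)) → (omegaConcat u ∈ L ↔ omegaConcat u' ∈ L)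

/-- Nondeterministic Büchi automaton. -/
structure BuchiAutomaton (A : Type*) where
  Q : Type
  finQ : Finite Q
  init : Set Q
  step : Q → A → Set Q
  acc : Set Q

def BuchiAutomaton.Accepts (M : BuchiAutomaton A) (x : ℕ → A) : Prop :=
  ∃ ρ : ℕ → M.Q, ρ 0 ∈ M.init ∧ (∀ n, ρ (n + 1) ∈ M.step (ρ n) (x n)) ∧
    ∀ n, ∃ m, n ≤ m ∧ ρ m ∈ M.acc

def OmegaRegular (L : Set (ℕ → A)) : Prop :=
  ∃ M : BuchiAutomaton A, ∀ x, x ∈ L ↔ M.Accepts x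

/-- ω-words over `{a, b}` (with `a = true`, `b = false`) of the form `a^{k₁} b a^{k₂} b ⋯`
whose blocks of `a`'s have unbounded size. -/
def Uset : Set (ℕ → Bool) :=
  {x | (∀ n, ∃ m, n ≤ m ∧ x m = false) ∧ ∀ n, ∃ k, ∀ i < n, x (k + i) = true}

section ST13
variable {A : Type*}

theorem st13_prefixList_succ (u : ℕ → List A) (m : ℕ) :
    prefixList u (m+1) = prefixList u m ++ u m := by
  simp [prefixList, List.range_succ]

theorem st13_prefixList_zero (u : ℕ → List A) : prefixList u 0 = [] := rfl

theorem st13_prefixList_one (u : ℕ → List A) : prefixList u 1 = u 0 := by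
  simp [prefixList, List.range_succ]

theorem st13_prefixList_prefix (u : ℕ → List A) {m m' : ℕ} (h : m ≤ m') :
    prefixList u m <+: prefixList u m' := by
  induction m', h using Nat.le_induction with
  | base => exact List.prefix_refl _
  | succ k hk ih => exact ih.trans (by rw [st13_prefixList_succ]; exact List.prefix_append _ _)

theorem st13_prefixList_congr {u u' : ℕ → List A} {m : ℕ} (h : ∀ i < m, u i = u' i) :
    prefixList u m = prefixList u' m := by
  induction m with
  | zero => rfl
  | succ k ih =>
    rw [st13_prefixList_succ, st13_prefixList_succ, ih (fun i hi => h i (by omega)), h k (by omega)]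

theorem st13_prefixList_add (u : ℕ → List A) (a b : ℕ) :
    prefixList u (a + b) = prefixList u a ++ prefixList (fun n => u (a + n)) b := by
  induction b with
  | zero => simp [st13_prefixList_zero]
  | succ b ih =>
    rw [show a + (b+1) = (a+b)+1 by omega, st13_prefixList_succ, ih, st13_prefixList_succ,
      List.append_assoc]

theorem st13_unbounded {u : ℕ → List A} (hu : InfOftenNonempty u) (n : ℕ) :
    ∃ m, n < (prefixList u m).length := by
  induction n with
  | zero =>
    obtain ⟨m, -, hm⟩ := hu 0
    refine ⟨m+1, ?_⟩
    rw [st13_prefixList_succ]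
    simp only [List.length_append]
    have := List.length_pos_iff.2 hm
    omega
  | succ n ih =>
    obtain ⟨m, hm⟩ := ih
    obtain ⟨k, hk, hk'⟩ := hu m
    refine ⟨k+1, ?_⟩
    have h1 := (st13_prefixList_prefix u hk).length_le
    have h2 : 1 ≤ (u k).length := List.length_pos_iff.2 hk'
    rw [st13_prefixList_succ]
    simp only [List.length_append]
    omega

theorem st13_IsPrefix_getD {l l' : List A} (h : l <+: l') {n : ℕ} (hn : n < l.length) (d : A) :
    l.getD n d = l'.getD n d := by
  obtain ⟨r, rfl⟩ := h
  rw [List.getD_append _ _ _ _ hn]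

theorem st13_omegaConcat_eval [Inhabited A] {u : ℕ → List A} {n m : ℕ}
    (h : n < (prefixList u m).length) :
    omegaConcat u n = (prefixList u m).getD n default := by
  have hex : ∃ m, n < (prefixList u m).length := ⟨m, h⟩
  rw [omegaConcat, dif_pos hex]
  have h2 := Nat.find_spec hex
  rcases le_total (Nat.find hex) m with hle | hle
  · exact st13_IsPrefix_getD (st13_prefixList_prefix u hle) h2 _
  · exact (st13_IsPrefix_getD (st13_prefixList_prefix u hle) h _).symm

theorem st13_omegaConcat_congr [Inhabited A] {u u' : ℕ → List A}
    (hu : ∀ n, ∃ m, n < (prefixList u m).length)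
    (hpre : ∀ m, ∃ m', prefixList u m <+: prefixList u' m') :
    omegaConcat u = omegaConcat u' := by
  funext n
  obtain ⟨m, hm⟩ := hu n
  obtain ⟨m', hm'⟩ := hpre m
  have hn' : n < (prefixList u' m').length := lt_of_lt_of_le hm hm'.length_le
  rw [st13_omegaConcat_eval hm, st13_omegaConcat_eval hn', st13_IsPrefix_getD hm' hm]

end ST13

section ST13B
variable {A : Type*}

def st13_mseg (u : ℕ → List A) (i j : ℕ) : List A :=
  (List.range (j - i)).flatMap (fun k => u (i + k))

theorem st13_mseg_self (u : ℕ → List A) (i : ℕ) : st13_mseg u i i = [] := by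
  simp [st13_mseg]

theorem st13_mseg_zero (u : ℕ → List A) (m : ℕ) : st13_mseg u 0 m = prefixList u m := by
  simp [st13_mseg, prefixList]

theorem st13_mseg_succ (u : ℕ → List A) {i j : ℕ} (h : i ≤ j) :
    st13_mseg u i (j+1) = st13_mseg u i j ++ u j := by
  have : j + 1 - i = (j - i) + 1 := by omega
  rw [st13_mseg, this, List.range_succ, List.flatMap_append]
  simp [st13_mseg, show i + (j - i) = j by omega]

theorem st13_mseg_append (u : ℕ → List A) {i j k : ℕ} (hij : i ≤ j) (hjk : j ≤ k) :
    st13_mseg u i j ++ st13_mseg u j k = st13_mseg u i k := by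
  induction k, hjk using Nat.le_induction with
  | base => simp [st13_mseg_self]
  | succ k hk ih =>
    rw [st13_mseg_succ u hk, st13_mseg_succ u (le_trans hij hk), ← List.append_assoc, ih]

theorem st13_mseg_cons (u : ℕ → List A) {i j : ℕ} (h : i < j) :
    st13_mseg u i j = u i ++ st13_mseg u (i+1) j := by
  have h1 : st13_mseg u i (i+1) = u i := by
    simp [st13_mseg, List.range_succ]
  rw [← st13_mseg_append u (by omega : i ≤ i+1) h, h1]

theorem st13_mseg_map (u : ℕ → List A) (i j : ℕ) :
    st13_mseg u i j = ((List.range (j - i)).map (fun k => u (i + k))).flatten := by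
  rw [st13_mseg, List.flatMap_def]

theorem st13_prefixList_const_nil (m : ℕ) :
    prefixList (fun _ => ([] : List A)) m = [] := by
  induction m with
  | zero => rfl
  | succ k ih => rw [st13_prefixList_succ, ih]; rfl

theorem st13_prefixList_getD (l : List (List A)) :
    prefixList (fun n => l.getD n []) l.length = l.flatten := by
  induction l using List.reverseRecOn with
  | nil => rfl
  | append_singleton l a ih =>
    rw [List.length_append, List.length_singleton, st13_prefixList_succ]
    have h1 : prefixList (fun n => (l ++ [a]).getD n []) l.length
        = prefixList (fun n => l.getD n []) l.length := by
      apply st13_prefixList_congr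
      intro i hi
      exact List.getD_append _ _ _ _ hi
    have h2 : (l ++ [a]).getD l.length [] = a := by
      rw [List.getD_eq_getElem?_getD, List.getElem?_append_right (le_refl _)]
      simp
    rw [h1, ih, h2, List.flatten_append, List.flatten_cons, List.flatten_nil, List.append_nil]

def st13_cycleSeq (pre loop : List (List A)) : ℕ → List A := fun n =>
  if n < pre.length then pre.getD n [] else loop.getD ((n - pre.length) % loop.length) []

theorem st13_cycleSeq_pl_pre (pre loop : List (List A)) :
    prefixList (st13_cycleSeq pre loop) pre.length = pre.flatten := by
  rw [← st13_prefixList_getD pre]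
  apply st13_prefixList_congr
  intro i hi
  simp [st13_cycleSeq, hi]

theorem st13_cycleSeq_pl (pre loop : List (List A)) (k : ℕ) :
    prefixList (st13_cycleSeq pre loop) (pre.length + k * loop.length)
      = pre.flatten ++ (List.replicate k loop.flatten).flatten := by
  induction k with
  | zero => simp [st13_cycleSeq_pl_pre]
  | succ k ih =>
    have harith : pre.length + (k+1) * loop.length
        = (pre.length + k * loop.length) + loop.length := by ring
    rw [harith, st13_prefixList_add, ih]
    have hsh : prefixList (fun n => st13_cycleSeq pre loop (pre.length + k * loop.length + n))
        loop.length = loop.flatten := by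
      rw [← st13_prefixList_getD loop]
      apply st13_prefixList_congr
      intro i hi
      simp only [st13_cycleSeq]
      rw [if_neg (by omega)]
      congr 1
      have : pre.length + k * loop.length + i - pre.length = k * loop.length + i := by omega
      rw [this, Nat.add_comm, Nat.add_mul_mod_self_right, Nat.mod_eq_of_lt hi]
    rw [hsh, List.replicate_succ', List.flatten_append, List.flatten_cons, List.flatten_nil,
      List.append_nil, List.append_assoc]

theorem st13_length_flatten_replicate (k : ℕ) (v : List A) :
    (List.replicate k v).flatten.length = k * v.length := by
  induction k with
  | zero => simp
  | succ k ih => rw [List.replicate_succ, List.flatten_cons, List.length_append, ih]; ring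

theorem st13_getD_flatten_replicate (k : ℕ) (v : List A) (d : A) {j : ℕ}
    (hj : j < k * v.length) :
    (List.replicate k v).flatten.getD j d = v.getD (j % v.length) d := by
  induction k generalizing j with
  | zero => omega
  | succ k ih =>
    have hj' : j < k * v.length + v.length := by
      have : (k+1) * v.length = k * v.length + v.length := by ring
      omega
    rw [List.replicate_succ, List.flatten_cons]
    rcases lt_or_ge j v.length with h | h
    · rw [List.getD_append _ _ _ _ h, Nat.mod_eq_of_lt h]
    · rw [List.getD_eq_getElem?_getD, List.getElem?_append_right h,
        ← List.getD_eq_getElem?_getD (a := d), ih (by omega), Nat.mod_eq_sub_mod h]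

theorem st13_exists_nonempty_of_flatten {loop : List (List A)} (h : loop.flatten ≠ []) :
    ∃ i < loop.length, loop.getD i [] ≠ [] := by
  by_contra hc
  push_neg at hc
  apply h
  rw [← st13_prefixList_getD loop]
  rw [st13_prefixList_congr (u' := fun _ => ([] : List A)) hc]
  exact st13_prefixList_const_nil _

theorem st13_cycleSeq_IO {pre loop : List (List A)} (h : loop.flatten ≠ []) :
    InfOftenNonempty (st13_cycleSeq pre loop) := by
  obtain ⟨i, hi, hne⟩ := st13_exists_nonempty_of_flatten h
  have hL : 1 ≤ loop.length := by omega
  intro n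
  refine ⟨pre.length + n * loop.length + i, by nlinarith, ?_⟩
  simp only [st13_cycleSeq]
  rw [if_neg (by omega)]
  have : pre.length + n * loop.length + i - pre.length = n * loop.length + i := by omega
  rw [this, Nat.add_comm, Nat.add_mul_mod_self_right, Nat.mod_eq_of_lt hi]
  exact hne

theorem st13_cycleSeq_eval [Inhabited A] {pre loop : List (List A)} (h : loop.flatten ≠ []) :
    omegaConcat (st13_cycleSeq pre loop) = prepend pre.flatten (omegaPow loop.flatten) := by
  funext n
  have hV : 0 < loop.flatten.length := List.length_pos_iff.2 h
  have hL : 0 < loop.length := List.length_pos_iff.2 (by rintro rfl; exact h rfl)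
  set P := pre.flatten.length
  have hlen : n < (prefixList (st13_cycleSeq pre loop) (pre.length + (n+1) * loop.length)).length := by
    rw [st13_cycleSeq_pl, List.length_append, st13_length_flatten_replicate]
    nlinarith
  rw [st13_omegaConcat_eval hlen, st13_cycleSeq_pl]
  rcases lt_or_ge n P with hn | hn
  · rw [List.getD_append _ _ _ _ hn, prepend, dif_pos hn, List.getD_eq_getElem _ _ hn]
    simp [List.get_eq_getElem]
  · rw [List.getD_eq_getElem?_getD, List.getElem?_append_right hn,
      ← List.getD_eq_getElem?_getD (a := default),
      st13_getD_flatten_replicate _ _ _ (by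
        have h1 : n < P + (n+1) * loop.flatten.length := by nlinarith
        have h2 : (List.replicate (n+1) loop.flatten).flatten.length
            = (n+1) * loop.flatten.length := st13_length_flatten_replicate _ _
        omega), prepend, dif_neg (by omega), omegaPow]

theorem st13_prepend_prepend [Inhabited A] (w w' : List A) (y : ℕ → A) :
    prepend w (prepend w' y) = prepend (w ++ w') y := by
  funext n
  simp only [prepend, List.length_append]
  rcases lt_or_ge n w.length with h | h
  · rw [dif_pos h, dif_pos (by omega)]
    simp [List.getElem_append_left h]
  · rw [dif_neg (by omega)]
    rcases lt_or_ge (n - w.length) w'.length with h2 | h2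
    · rw [dif_pos h2, dif_pos (by omega)]
      simp only [List.get_eq_getElem]
      rw [List.getElem_append_right (by omega)]
    · rw [dif_neg (not_lt.2 h2), dif_neg (by omega)]
      congr 1
      omega

theorem st13_prepend_pow_absorb [Inhabited A] (k : ℕ) {v : List A} (hv : v ≠ []) :
    prepend (List.replicate k v).flatten (omegaPow v) = omegaPow v := by
  have hV : 0 < v.length := List.length_pos_iff.2 hv
  funext n
  rcases lt_or_ge n (k * v.length) with h | h
  · have h' : n < (List.replicate k v).flatten.length := by
      rw [st13_length_flatten_replicate]; exact h
    rw [prepend, dif_pos h']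
    simp only [List.get_eq_getElem]
    rw [← List.getD_eq_getElem _ default h', st13_getD_flatten_replicate _ _ _ h]
    rfl
  · have h' : ¬ n < (List.replicate k v).flatten.length := by
      rw [st13_length_flatten_replicate]; omega
    rw [prepend, dif_neg h']
    simp only [omegaPow, st13_length_flatten_replicate]
    congr 1
    conv_rhs => rw [show n = (n - k * v.length) + k * v.length from by omega]
    rw [Nat.add_mul_mod_self_right]

theorem st13_omegaPow_pow [Inhabited A] {d : ℕ} (hd : 1 ≤ d) {v : List A} (hv : v ≠ []) :
    omegaPow ((List.replicate d v).flatten) = omegaPow v := by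
  have hV : 0 < v.length := List.length_pos_iff.2 hv
  funext n
  simp only [omegaPow, st13_length_flatten_replicate]
  rw [st13_getD_flatten_replicate _ _ _ (Nat.mod_lt _ (by positivity)),
    Nat.mod_mod_of_dvd _ ⟨d, by ring⟩]

end ST13B

section ST13R
variable {F : Type*} [Finite F]

theorem st13_exists_infinite_fiber {S : Set ℕ} (hS : S.Infinite) (g : ℕ → F) :
    ∃ e, {n | n ∈ S ∧ g n = e}.Infinite := by
  by_contra h
  push_neg at h
  have : S ⊆ ⋃ e ∈ (Set.univ : Set F), {n | n ∈ S ∧ g n = e} := by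
    intro n hn
    simp only [Set.mem_iUnion]
    exact ⟨g n, trivial, hn, rfl⟩
  exact hS ((Set.Finite.biUnion Set.finite_univ (fun e _ => h e)).subset this)

noncomputable def st13_rstep (c : ℕ → ℕ → F) (S : {S : Set ℕ // S.Infinite}) :
    {S : Set ℕ // S.Infinite} :=
  let a := sInf S.1
  let T : {S : Set ℕ // S.Infinite} := ⟨{n | n ∈ S.1 ∧ a < n}, by
    have : {n | n ∈ S.1 ∧ a < n} = S.1 \ Set.Iic a := by
      ext n; simp only [Set.mem_setOf_eq, Set.mem_diff, Set.mem_Iic, not_le]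
    rw [this]
    exact S.2.diff (Set.finite_Iic a)⟩
  ⟨{n | n ∈ T.1 ∧ c a n = Classical.choose (st13_exists_infinite_fiber T.2 (c a))},
    Classical.choose_spec (st13_exists_infinite_fiber T.2 (c a))⟩

noncomputable def st13_rchain (c : ℕ → ℕ → F) : ℕ → {S : Set ℕ // S.Infinite}
  | 0 => ⟨Set.univ, Set.infinite_univ⟩
  | n+1 => st13_rstep c (st13_rchain c n)

noncomputable def st13_ra (c : ℕ → ℕ → F) (n : ℕ) : ℕ := sInf (st13_rchain c n).1

theorem st13_ra_mem (c : ℕ → ℕ → F) (n : ℕ) : st13_ra c n ∈ (st13_rchain c n).1 :=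
  Nat.sInf_mem (st13_rchain c n).2.nonempty

theorem st13_rchain_succ_sub (c : ℕ → ℕ → F) (n : ℕ) :
    (st13_rchain c (n+1)).1 ⊆ {m | m ∈ (st13_rchain c n).1 ∧ st13_ra c n < m} := by
  intro m hm
  exact hm.1

theorem st13_rchain_sub (c : ℕ → ℕ → F) {n n' : ℕ} (h : n ≤ n') :
    (st13_rchain c n').1 ⊆ (st13_rchain c n).1 := by
  induction n', h using Nat.le_induction with
  | base => exact fun _ h => h
  | succ k hk ih => exact fun m hm => ih (st13_rchain_succ_sub c k hm).1

theorem st13_ra_lt (c : ℕ → ℕ → F) {n m : ℕ} (hm : m ∈ (st13_rchain c (n+1)).1) :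
    st13_ra c n < m := (st13_rchain_succ_sub c n hm).2

theorem st13_ra_strictMono (c : ℕ → ℕ → F) : StrictMono (st13_ra c) := by
  have h : ∀ n, st13_ra c n < st13_ra c (n+1) :=
    fun n => st13_ra_lt c (st13_ra_mem c (n+1))
  exact strictMono_nat_of_lt_succ h

theorem st13_ra_color_eq (c : ℕ → ℕ → F) (n : ℕ) {m m' : ℕ}
    (hm : m ∈ (st13_rchain c (n+1)).1) (hm' : m' ∈ (st13_rchain c (n+1)).1) :
    c (st13_ra c n) m = c (st13_ra c n) m' := hm.2.trans hm'.2.symm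

theorem st13_ra_color (c : ℕ → ℕ → F) {i j : ℕ} (h : i < j) :
    c (st13_ra c i) (st13_ra c j) = c (st13_ra c i) (st13_ra c (i+1)) :=
  st13_ra_color_eq c i (st13_rchain_sub c (by omega : i + 1 ≤ j) (st13_ra_mem c j))
    (st13_ra_mem c (i+1))

theorem st13_ramsey (c : ℕ → ℕ → F) :
    ∃ g : ℕ → ℕ, StrictMono g ∧ ∃ e, ∀ i j, i < j → c (g i) (g j) = e := by
  set d : ℕ → F := fun n => c (st13_ra c n) (st13_ra c (n+1)) with hd
  obtain ⟨e, he⟩ := st13_exists_infinite_fiber (Set.infinite_univ (α := ℕ)) d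
  have he' : {n | d n = e}.Infinite := by
    apply he.mono; intro n hn; exact hn.2
  set p : ℕ → Prop := fun n => d n = e with hp
  refine ⟨fun k => st13_ra c (Nat.nth p k), ?_, e, ?_⟩
  · exact (st13_ra_strictMono c).comp (Nat.nth_strictMono he')
  · intro i j hij
    have h1 : Nat.nth p i < Nat.nth p j := Nat.nth_strictMono he' hij
    rw [st13_ra_color c h1]
    exact Nat.nth_mem_of_infinite he' i
end ST13R

section ST13S
variable {A : Type*} {F : Type*}

def st13_Step1 (f : List A → F) (y y' : List A) : Prop :=
  ∃ w x x' z, f x = f x' ∧ y = w ++ x ++ z ∧ y' = w ++ x' ++ z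

def st13_Step2 (f : List A → F) (y y' : List A) : Prop :=
  ∃ w x x' z, x ≠ [] ∧ x' ≠ [] ∧ f x = f x' ∧ y = w ++ x ++ z ∧ y' = w ++ x' ++ z

def st13_Sim1 (f : List A → F) : List A → List A → Prop :=
  Relation.ReflTransGen (st13_Step1 f)

def st13_Sim2 (f : List A → F) : List A → List A → Prop :=
  Relation.ReflTransGen (st13_Step2 f)

theorem st13_Step1_symm {f : List A → F} : Symmetric (st13_Step1 f) := by
  rintro y y' ⟨w, x, x', z, hf, rfl, rfl⟩
  exact ⟨w, x', x, z, hf.symm, rfl, rfl⟩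

theorem st13_Step2_symm {f : List A → F} : Symmetric (st13_Step2 f) := by
  rintro y y' ⟨w, x, x', z, hx, hx', hf, rfl, rfl⟩
  exact ⟨w, x', x, z, hx', hx, hf.symm, rfl, rfl⟩

theorem st13_Sim1_symm {f : List A → F} {y y' : List A} (h : st13_Sim1 f y y') :
    st13_Sim1 f y' y := by
  haveI : Std.Symm (st13_Step1 f) := ⟨fun a b h => st13_Step1_symm h⟩
  exact (Relation.ReflTransGen.symmetric).symm _ _ h

theorem st13_Sim2_symm {f : List A → F} {y y' : List A} (h : st13_Sim2 f y y') :
    st13_Sim2 f y' y := by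
  haveI : Std.Symm (st13_Step2 f) := ⟨fun a b h => st13_Step2_symm h⟩
  exact (Relation.ReflTransGen.symmetric).symm _ _ h

theorem st13_Sim1_refl {f : List A → F} (y : List A) : st13_Sim1 f y y :=
  Relation.ReflTransGen.refl

theorem st13_Sim2_refl {f : List A → F} (y : List A) : st13_Sim2 f y y :=
  Relation.ReflTransGen.refl

theorem st13_Sim1_trans {f : List A → F} {a b c : List A}
    (h1 : st13_Sim1 f a b) (h2 : st13_Sim1 f b c) : st13_Sim1 f a c := h1.trans h2

theorem st13_Sim2_trans {f : List A → F} {a b c : List A}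
    (h1 : st13_Sim2 f a b) (h2 : st13_Sim2 f b c) : st13_Sim2 f a c := h1.trans h2

theorem st13_kerf_Sim1 {f : List A → F} {u v : List A} (h : f u = f v) : st13_Sim1 f u v :=
  Relation.ReflTransGen.single ⟨[], u, v, [], h, by simp, by simp⟩

theorem st13_kerf_Sim2 {f : List A → F} {u v : List A} (hu : u ≠ []) (hv : v ≠ [])
    (h : f u = f v) : st13_Sim2 f u v :=
  Relation.ReflTransGen.single ⟨[], u, v, [], hu, hv, h, by simp, by simp⟩

theorem st13_Sim2_Sim1 {f : List A → F} {u v : List A} (h : st13_Sim2 f u v) :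
    st13_Sim1 f u v :=
  Relation.ReflTransGen.mono
    (fun a b (hab : st13_Step2 f a b) => by
      obtain ⟨w, x, x', z, _, _, hf, h1, h2⟩ := hab; exact ⟨w, x, x', z, hf, h1, h2⟩) _ _ h

theorem st13_Sim2_ne {f : List A → F} {u v : List A} (h : st13_Sim2 f u v) (hu : u ≠ []) :
    v ≠ [] := by
  induction h with
  | refl => exact hu
  | tail _ hstep _ =>
    obtain ⟨w, x, x', z, _, hx', _, _, rfl⟩ := hstep
    simp [hx']

theorem st13_Step1_append_right {f : List A → F} {y y' : List A} (t : List A)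
    (h : st13_Step1 f y y') : st13_Step1 f (y ++ t) (y' ++ t) := by
  obtain ⟨w, x, x', z, hf, rfl, rfl⟩ := h
  exact ⟨w, x, x', z ++ t, hf, by simp, by simp⟩

theorem st13_Step1_append_left {f : List A → F} {y y' : List A} (t : List A)
    (h : st13_Step1 f y y') : st13_Step1 f (t ++ y) (t ++ y') := by
  obtain ⟨w, x, x', z, hf, rfl, rfl⟩ := h
  exact ⟨t ++ w, x, x', z, hf, by simp, by simp⟩

theorem st13_Step2_append_right {f : List A → F} {y y' : List A} (t : List A)
    (h : st13_Step2 f y y') : st13_Step2 f (y ++ t) (y' ++ t) := by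
  obtain ⟨w, x, x', z, hx, hx', hf, rfl, rfl⟩ := h
  exact ⟨w, x, x', z ++ t, hx, hx', hf, by simp, by simp⟩

theorem st13_Step2_append_left {f : List A → F} {y y' : List A} (t : List A)
    (h : st13_Step2 f y y') : st13_Step2 f (t ++ y) (t ++ y') := by
  obtain ⟨w, x, x', z, hx, hx', hf, rfl, rfl⟩ := h
  exact ⟨t ++ w, x, x', z, hx, hx', hf, by simp, by simp⟩

theorem st13_Sim1_append {f : List A → F} {u u' v v' : List A}
    (hu : st13_Sim1 f u u') (hv : st13_Sim1 f v v') : st13_Sim1 f (u ++ v) (u' ++ v') := by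
  have h1 : st13_Sim1 f (u ++ v) (u' ++ v) :=
    Relation.ReflTransGen.lift (fun y => y ++ v) (fun a b (h : st13_Step1 f a b) => st13_Step1_append_right v h) _ _ hu
  have h2 : st13_Sim1 f (u' ++ v) (u' ++ v') :=
    Relation.ReflTransGen.lift (fun y => u' ++ y) (fun a b (h : st13_Step1 f a b) => st13_Step1_append_left u' h) _ _ hv
  exact h1.trans h2

theorem st13_Sim2_append {f : List A → F} {u u' v v' : List A}
    (hu : st13_Sim2 f u u') (hv : st13_Sim2 f v v') : st13_Sim2 f (u ++ v) (u' ++ v') := by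
  have h1 : st13_Sim2 f (u ++ v) (u' ++ v) :=
    Relation.ReflTransGen.lift (fun y => y ++ v) (fun a b (h : st13_Step2 f a b) => st13_Step2_append_right v h) _ _ hu
  have h2 : st13_Sim2 f (u' ++ v) (u' ++ v') :=
    Relation.ReflTransGen.lift (fun y => u' ++ y) (fun a b (h : st13_Step2 f a b) => st13_Step2_append_left u' h) _ _ hv
  exact h1.trans h2

theorem st13_Sim2_flatten {f : List A → F} {l l' : List (List A)}
    (h : List.Forall₂ (st13_Sim2 f) l l') : st13_Sim2 f l.flatten l'.flatten := by
  induction h with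
  | nil => exact st13_Sim2_refl _
  | cons hab _ ih =>
    rw [List.flatten_cons, List.flatten_cons]
    exact st13_Sim2_append hab ih

end ST13S

section ST13P
variable {A : Type*} [Inhabited A] {F : Type*} {f : List A → F} {L : Set (ℕ → A)}

def st13_Hrec (f : List A → F) (L : Set (ℕ → A)) : Prop :=
  ∀ u u' : ℕ → List A, InfOftenNonempty u → InfOftenNonempty u' →
    (∀ i, f (u i) = f (u' i)) → (omegaConcat u ∈ L ↔ omegaConcat u' ∈ L)

theorem st13_periodic_step_pre (H : st13_Hrec f L) {U U' v : List A}
    (hstep : st13_Step1 f U U') (hv : v ≠ []) :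
    (prepend U (omegaPow v) ∈ L ↔ prepend U' (omegaPow v) ∈ L) := by
  obtain ⟨w, x, x', z, hf, rfl, rfl⟩ := hstep
  have hfl : ([v] : List (List A)).flatten ≠ [] := by simpa
  have e1 : omegaConcat (st13_cycleSeq [w, x, z] [v]) = prepend (w ++ x ++ z) (omegaPow v) := by
    rw [st13_cycleSeq_eval hfl]; simp
  have e2 : omegaConcat (st13_cycleSeq [w, x', z] [v]) = prepend (w ++ x' ++ z) (omegaPow v) := by
    rw [st13_cycleSeq_eval hfl]; simp
  have hpt : ∀ i, f (st13_cycleSeq [w, x, z] [v] i) = f (st13_cycleSeq [w, x', z] [v] i) := by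
    intro i
    by_cases h3 : i < 3
    · interval_cases i <;> simp [st13_cycleSeq, hf]
    · simp [st13_cycleSeq, h3, show ¬ i < 3 from h3]
  have := H _ _ (st13_cycleSeq_IO hfl) (st13_cycleSeq_IO hfl) hpt
  rwa [e1, e2] at this

theorem st13_periodic_pre (H : st13_Hrec f L) {U U' v : List A}
    (hsim : st13_Sim1 f U U') (hv : v ≠ []) :
    (prepend U (omegaPow v) ∈ L ↔ prepend U' (omegaPow v) ∈ L) := by
  induction hsim with
  | refl => exact Iff.rfl
  | tail _ hstep ih => exact ih.trans (st13_periodic_step_pre H hstep hv)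

theorem st13_periodic_step_loop (H : st13_Hrec f L) {U y y' : List A}
    (hstep : st13_Step2 f y y') :
    (prepend U (omegaPow y) ∈ L ↔ prepend U (omegaPow y') ∈ L) := by
  obtain ⟨w, x, x', z, hx, hx', hf, rfl, rfl⟩ := hstep
  have hfl : ([w, x, z] : List (List A)).flatten ≠ [] := by simp [hx]
  have hfl' : ([w, x', z] : List (List A)).flatten ≠ [] := by simp [hx']
  have e1 : omegaConcat (st13_cycleSeq [U] [w, x, z]) = prepend U (omegaPow (w ++ x ++ z)) := by
    rw [st13_cycleSeq_eval hfl]; simp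
  have e2 : omegaConcat (st13_cycleSeq [U] [w, x', z]) = prepend U (omegaPow (w ++ x' ++ z)) := by
    rw [st13_cycleSeq_eval hfl']; simp
  have hpt : ∀ i, f (st13_cycleSeq [U] [w, x, z] i) = f (st13_cycleSeq [U] [w, x', z] i) := by
    intro i
    cases i with
    | zero => simp [st13_cycleSeq]
    | succ n =>
      have h3 : n % 3 = 0 ∨ n % 3 = 1 ∨ n % 3 = 2 := by omega
      simp only [st13_cycleSeq, List.length_cons, List.length_nil]
      rw [if_neg (by omega), if_neg (by omega)]
      norm_num
      rcases h3 with h | h | h <;> simp [h, hf]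
  have := H _ _ (st13_cycleSeq_IO hfl) (st13_cycleSeq_IO hfl') hpt
  rwa [e1, e2] at this

theorem st13_periodic_loop (H : st13_Hrec f L) {U y y' : List A}
    (hsim : st13_Sim2 f y y') :
    (prepend U (omegaPow y) ∈ L ↔ prepend U (omegaPow y') ∈ L) := by
  induction hsim with
  | refl => exact Iff.rfl
  | tail _ hstep ih => exact ih.trans (st13_periodic_step_loop H hstep)

theorem st13_LemB (H : st13_Hrec f L) {U U' y y' : List A}
    (h1 : st13_Sim1 f U U') (h2 : st13_Sim2 f y y') (hy : y ≠ []) :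
    (prepend U (omegaPow y) ∈ L ↔ prepend U' (omegaPow y') ∈ L) :=
  (st13_periodic_pre H h1 hy).trans (st13_periodic_loop H h2)

end ST13P

section ST13C
variable {A : Type*} [Inhabited A] {F : Type*} [Finite F] {f : List A → F} {L : Set (ℕ → A)}

noncomputable def st13_merged (u : ℕ → List A) (g : ℕ → ℕ) : ℕ → List A
  | 0 => prefixList u (g 0 + 1)
  | (i+1) => st13_mseg u (g i + 1) (g (i+1) + 1)

theorem st13_merged_pl {u : ℕ → List A} {g : ℕ → ℕ} (hg : StrictMono g) (m : ℕ) :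
    prefixList (st13_merged u g) (m+1) = prefixList u (g m + 1) := by
  induction m with
  | zero =>
    rw [st13_prefixList_one]
    rfl
  | succ m ih =>
    rw [st13_prefixList_succ, ih]
    show prefixList u (g m + 1) ++ st13_mseg u (g m + 1) (g (m+1) + 1) = _
    rw [← st13_mseg_zero, st13_mseg_append u (by omega) (by
      have := hg (show m < m + 1 by omega); omega), st13_mseg_zero]

theorem st13_mseg_sim_replicate {v : List A} {u : ℕ → List A}
    (hsim : ∀ k, st13_Sim2 f (u (k+1)) v) {a b : ℕ} (ha : 1 ≤ a) (hab : a ≤ b) :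
    st13_Sim2 f (st13_mseg u a b) ((List.replicate (b - a) v).flatten) := by
  induction b, hab using Nat.le_induction with
  | base => simp [st13_mseg_self]; exact st13_Sim2_refl _
  | succ b hb ih =>
    rw [st13_mseg_succ u hb, show b + 1 - a = (b - a) + 1 by omega, List.replicate_succ',
      List.flatten_append, List.flatten_cons, List.flatten_nil, List.append_nil]
    refine st13_Sim2_append ih ?_
    obtain ⟨k, rfl⟩ : ∃ k, b = k + 1 := ⟨b - 1, by omega⟩
    exact hsim k

theorem st13_CORE (H : st13_Hrec f L) {u : ℕ → List A} {u' v' : List A}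
    (h0 : st13_Sim1 f (u 0) u') (hb : ∀ i, st13_Sim2 f (u (i+1)) v')
    (hne : ∀ i, u (i+1) ≠ []) (hv' : v' ≠ []) :
    (omegaConcat u ∈ L ↔ prepend u' (omegaPow v') ∈ L) := by
  obtain ⟨g, hg, e, hge⟩ := st13_ramsey (fun i j => f (st13_mseg u (i+1) (j+1)))
  set U := st13_merged u g with hU
  have hIOu : InfOftenNonempty u := fun n => ⟨n + 1, by omega, hne n⟩
  have hUne : ∀ i, U (i+1) ≠ [] := by
    intro i
    show st13_mseg u (g i + 1) (g (i+1) + 1) ≠ []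
    rw [st13_mseg_cons u (by have := hg (show i < i+1 by omega); omega)]
    simp [hne (g i)]
  have hIOU : InfOftenNonempty U := fun n => ⟨n + 1, by omega, hUne n⟩
  have hcongr : omegaConcat U = omegaConcat u := by
    apply st13_omegaConcat_congr (st13_unbounded hIOU)
    intro m
    cases m with
    | zero => exact ⟨0, by rw [st13_prefixList_zero]; exact List.nil_prefix⟩
    | succ m => exact ⟨g m + 1, by rw [st13_merged_pl hg]⟩
  have hUe : ∀ i, f (U (i+1)) = e := by
    intro i
    exact hge i (i+1) (by omega)
  have hU1 : U 1 ≠ [] := hUne 0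
  have hfl : ([U 1] : List (List A)).flatten ≠ [] := by simpa using hU1
  set W := st13_cycleSeq [U 0] [U 1] with hW
  have eW : omegaConcat W = prepend (U 0) (omegaPow (U 1)) := by
    rw [hW, st13_cycleSeq_eval hfl]; simp
  have hWpt : ∀ i, f (U i) = f (W i) := by
    intro i
    cases i with
    | zero => simp [hW, st13_cycleSeq]
    | succ n =>
      have : W (n+1) = U 1 := by
        simp only [hW, st13_cycleSeq, List.length_cons, List.length_nil]
        rw [if_neg (by omega)]
        simp [Nat.mod_one]
      rw [this, hUe n, hUe 0]
  have hIOW : InfOftenNonempty W := st13_cycleSeq_IO hfl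
  have iff1 : (omegaConcat U ∈ L ↔ omegaConcat W ∈ L) := H U W hIOU hIOW hWpt
  have hg01 : g 0 < g 1 := hg (by omega)
  have S0 : st13_Sim1 f (U 0) (u' ++ (List.replicate (g 0) v').flatten) := by
    show st13_Sim1 f (prefixList u (g 0 + 1)) _
    rw [← st13_mseg_zero, st13_mseg_cons u (by omega)]
    refine st13_Sim1_append h0 (st13_Sim2_Sim1 ?_)
    have := st13_mseg_sim_replicate (f := f) (v := v') hb (le_refl 1) (by omega : 1 ≤ g 0 + 1)
    simpa using this
  have S1 : st13_Sim2 f (U 1) ((List.replicate (g 1 - g 0) v').flatten) := by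
    show st13_Sim2 f (st13_mseg u (g 0 + 1) (g 1 + 1)) _
    have := st13_mseg_sim_replicate (f := f) (v := v') hb (by omega : 1 ≤ g 0 + 1)
      (by omega : g 0 + 1 ≤ g 1 + 1)
    simpa [show g 1 + 1 - (g 0 + 1) = g 1 - g 0 by omega] using this
  have iff2 := st13_LemB H S0 S1 hU1
  have ident : prepend (u' ++ (List.replicate (g 0) v').flatten)
      (omegaPow ((List.replicate (g 1 - g 0) v').flatten)) = prepend u' (omegaPow v') := by
    rw [st13_omegaPow_pow (by omega : 1 ≤ g 1 - g 0) hv', ← st13_prepend_prepend,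
      st13_prepend_pow_absorb _ hv']
  rw [← hcongr, iff1, eW, iff2, ident]

end ST13C

section ST13A
variable {A : Type*} [Inhabited A] {N : ℕ}

def st13_letters (x : ℕ → A) : ℕ → List A := fun n => [x n]

theorem st13_pl_letters_length (x : ℕ → A) (m : ℕ) :
    (prefixList (st13_letters x) m).length = m := by
  induction m with
  | zero => rfl
  | succ m ih => rw [st13_prefixList_succ, List.length_append, ih]; rfl

theorem st13_pl_letters_getD (x : ℕ → A) {k m : ℕ} (h : k < m) :
    (prefixList (st13_letters x) m).getD k default = x k := by
  induction m with
  | zero => omega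
  | succ m ih =>
    rw [st13_prefixList_succ]
    rcases lt_or_eq_of_le (by omega : k ≤ m) with h' | h'
    · rw [List.getD_append _ _ _ _ (by rw [st13_pl_letters_length]; exact h')]
      exact ih h'
    · subst h'
      rw [List.getD_eq_getElem?_getD, List.getElem?_append_right
        (by rw [st13_pl_letters_length])]
      simp [st13_pl_letters_length, st13_letters]

theorem st13_omegaConcat_letters (x : ℕ → A) : omegaConcat (st13_letters x) = x := by
  funext n
  have h : n < (prefixList (st13_letters x) (n+1)).length := by
    rw [st13_pl_letters_length]; omega
  rw [st13_omegaConcat_eval h, st13_pl_letters_getD x (by omega)]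

theorem st13_mseg_letters_ne (x : ℕ → A) {i j : ℕ} (h : i < j) :
    st13_mseg (st13_letters x) i j ≠ [] := by
  rw [st13_mseg_cons _ h]
  simp [st13_letters]

noncomputable def st13_blocksOf (x : ℕ → A) (b : ℕ → ℕ) : ℕ → List A
  | 0 => st13_mseg (st13_letters x) 0 (b 0)
  | (i+1) => st13_mseg (st13_letters x) (b i) (b (i+1))

theorem st13_blocksOf_pl (x : ℕ → A) {b : ℕ → ℕ} (hb : Monotone b) (m : ℕ) :
    prefixList (st13_blocksOf x b) (m+1) = prefixList (st13_letters x) (b m) := by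
  induction m with
  | zero =>
    rw [st13_prefixList_one]
    show st13_mseg (st13_letters x) 0 (b 0) = _
    rw [st13_mseg_zero]
  | succ m ih =>
    rw [st13_prefixList_succ, ih]
    show _ ++ st13_mseg (st13_letters x) (b m) (b (m+1)) = _
    rw [← st13_mseg_zero, st13_mseg_append _ (by omega) (hb (by omega : m ≤ m+1)),
      st13_mseg_zero]

theorem st13_blocksOf_ne (x : ℕ → A) {b : ℕ → ℕ} (hb : StrictMono b) (i : ℕ) :
    st13_blocksOf x b (i+1) ≠ [] :=
  st13_mseg_letters_ne x (hb (by omega : i < i + 1))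

theorem st13_blocksOf_IO (x : ℕ → A) {b : ℕ → ℕ} (hb : StrictMono b) :
    InfOftenNonempty (st13_blocksOf x b) :=
  fun n => ⟨n + 1, by omega, st13_blocksOf_ne x hb n⟩

theorem st13_blocksOf_concat (x : ℕ → A) {b : ℕ → ℕ} (hb : StrictMono b) :
    omegaConcat (st13_blocksOf x b) = x := by
  have h : omegaConcat (st13_blocksOf x b) = omegaConcat (st13_letters x) := by
    apply st13_omegaConcat_congr (st13_unbounded (st13_blocksOf_IO x hb))
    intro m
    cases m with
    | zero => exact ⟨0, by rw [st13_prefixList_zero]; exact List.nil_prefix⟩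
    | succ m => exact ⟨b m, by rw [st13_blocksOf_pl x hb.monotone]⟩
  rw [h, st13_omegaConcat_letters]

open Classical in
noncomputable def st13_rep (f : List A → Fin N) (s : Fin N) : List A :=
  if h : ∃ w : List A, f w = s then Classical.choose h else []

open Classical in
noncomputable def st13_rep' (f : List A → Fin N) (s : Fin N) : List A :=
  if h : ∃ w : List A, w ≠ [] ∧ f w = s then Classical.choose h else []

theorem st13_rep_spec (f : List A → Fin N) (w : List A) :
    st13_Sim1 f (st13_rep f (f w)) w := by
  rw [st13_rep]
  rw [dif_pos ⟨w, rfl⟩]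
  exact st13_kerf_Sim1 (Classical.choose_spec (⟨w, rfl⟩ : ∃ v : List A, f v = f w))

theorem st13_rep'_ne (f : List A → Fin N) {w : List A} (hw : w ≠ []) :
    st13_rep' f (f w) ≠ [] := by
  rw [st13_rep', dif_pos ⟨w, hw, rfl⟩]
  exact (Classical.choose_spec (⟨w, hw, rfl⟩ : ∃ v : List A, v ≠ [] ∧ f v = f w)).1

theorem st13_rep'_spec (f : List A → Fin N) {w : List A} (hw : w ≠ []) :
    st13_Sim2 f (st13_rep' f (f w)) w := by
  rw [st13_rep', dif_pos ⟨w, hw, rfl⟩]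
  obtain ⟨h1, h2⟩ := Classical.choose_spec (⟨w, hw, rfl⟩ : ∃ v : List A, v ≠ [] ∧ f v = f w)
  exact st13_kerf_Sim2 h1 hw h2

def st13_Cond (f : List A → Fin N) (L : Set (ℕ → A)) (s t : Fin N) : Prop :=
  ∃ uw vw : List A, st13_Sim1 f uw (st13_rep f s) ∧ st13_Sim2 f vw (st13_rep' f t) ∧
    vw ≠ [] ∧ prepend uw (omegaPow vw) ∈ L

noncomputable def st13_Auto (f : List A → Fin N) (L : Set (ℕ → A)) : BuchiAutomaton A where
  Q := Fin N ⊕ (Fin N × Option (Fin N))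
  finQ := inferInstance
  init := {Sum.inl (f [])}
  step := fun q a => match q with
    | Sum.inl s => {Sum.inl (f (st13_rep f s ++ [a]))} ∪
        {q' | ∃ t, st13_Cond f L s t ∧
          (q' = Sum.inr (t, some (f [a])) ∨
           (q' = Sum.inr (t, none) ∧ st13_Sim2 f (st13_rep' f (f [a])) (st13_rep' f t)))}
    | Sum.inr (t, some r) => {Sum.inr (t, some (f (st13_rep' f r ++ [a])))} ∪
        {q' | q' = Sum.inr (t, none) ∧
          st13_Sim2 f (st13_rep' f (f (st13_rep' f r ++ [a]))) (st13_rep' f t)}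
    | Sum.inr (t, none) => {Sum.inr (t, some (f [a]))} ∪
        {q' | q' = Sum.inr (t, none) ∧ st13_Sim2 f (st13_rep' f (f [a])) (st13_rep' f t)}
  acc := {q | ∃ t, q = Sum.inr (t, none)}

end ST13A

section ST13COMP
variable {A : Type*} [Inhabited A] {N : ℕ}

noncomputable def st13_sseq (f : List A → Fin N) (x : ℕ → A) : ℕ → Fin N
  | 0 => f []
  | (p+1) => f (st13_rep f (st13_sseq f x p) ++ [x p])

open Classical in
noncomputable def st13_qseq (f : List A → Fin N) (x : ℕ → A) (β : ℕ → ℕ) :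
    ℕ → Option (Fin N)
  | 0 => none
  | (p+1) => if ∃ m, β m = p + 1 then none
      else some (f ((match st13_qseq f x β p with
        | none => []
        | some r => st13_rep' f r) ++ [x p]))

theorem st13_qseq_bdry (f : List A → Fin N) (x : ℕ → A) {β : ℕ → ℕ} {p : ℕ}
    (hp : 1 ≤ p) (hB : ∃ m, β m = p) : st13_qseq f x β p = none := by
  obtain ⟨p', rfl⟩ : ∃ p', p = p' + 1 := ⟨p - 1, by omega⟩
  rw [st13_qseq, if_pos hB]

open Classical in
theorem st13_locate {β : ℕ → ℕ} (hβ : StrictMono β) {p : ℕ} (h0 : β 0 < p)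
    (hnB : ¬ ∃ m, β m = p) : ∃ m, β m < p ∧ p < β (m+1) := by
  classical
  have hle : ∀ m, m ≤ β m := fun m => hβ.le_apply
  have hspec : β (Nat.findGreatest (fun k => β k < p) p) < p :=
    Nat.findGreatest_spec (P := fun k => β k < p) (m := 0) (Nat.zero_le p) h0
  set m := Nat.findGreatest (fun k => β k < p) p with hm
  refine ⟨m, hspec, ?_⟩
  by_cases hc : m + 1 ≤ p
  · have hg : ¬ (β (m+1) < p) :=
      Nat.findGreatest_is_greatest (P := fun k => β k < p) (by omega) hc
    have hne : β (m+1) ≠ p := fun hc' => hnB ⟨_, hc'⟩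
    omega
  · exfalso
    have h1 := hle m
    have h3 : m ≤ p := Nat.findGreatest_le p
    omega

theorem st13_bdry_succ' {β : ℕ → ℕ} (hβ : StrictMono β) {m p k : ℕ}
    (h1 : β m < p) (h2 : p < β (m+1)) (hB : β k = p + 1) : β (m+1) = p + 1 := by
  have hk : m < k := hβ.lt_iff_lt.1 (by omega)
  have h3 : β (m+1) ≤ β k := hβ.monotone hk
  omega

theorem st13_bdry_succ {β : ℕ → ℕ} (hβ : StrictMono β) {m p k : ℕ}
    (hm : β m = p) (hB : β k = p + 1) : β (m+1) = p + 1 := by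
  have hk : m < k := hβ.lt_iff_lt.1 (by omega)
  have h3 : β (m+1) ≤ β k := hβ.monotone hk
  have h4 : β m < β (m+1) := hβ (by omega)
  omega

theorem st13_complete {f : List A → Fin N} {L : Set (ℕ → A)} (H : st13_Hrec f L)
    {x : ℕ → A} (hx : x ∈ L) : (st13_Auto f L).Accepts x := by
  classical
  obtain ⟨g, hg, e, hge⟩ :=
    st13_ramsey (fun i j => f (st13_mseg (st13_letters x) (i+1) (j+1)))
  set β : ℕ → ℕ := fun i => g i + 1 with hβdef
  have hβmono : StrictMono β := fun a b h => by
    simp only [hβdef]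
    have := hg h
    omega
  have hβ1 : ∀ m, 1 ≤ β m := fun m => by simp [hβdef]
  set U := st13_blocksOf x β with hUdef
  have hconcat : omegaConcat U = x := st13_blocksOf_concat x hβmono
  have hUne : ∀ i, U (i+1) ≠ [] := st13_blocksOf_ne x hβmono
  have hUblk : ∀ m, U (m+1) = st13_mseg (st13_letters x) (β m) (β (m+1)) := fun m => rfl
  have hUe : ∀ i, f (U (i+1)) = e := by
    intro i
    rw [hUblk]
    show (fun i j => f (st13_mseg (st13_letters x) (i+1) (j+1))) (g i) (g (i+1)) = e
    exact hge i (i+1) (by omega)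
  have hper : prepend (U 0) (omegaPow (U 1)) ∈ L := by
    have hcore := st13_CORE H (u := U) (u' := U 0) (v' := U 1) (st13_Sim1_refl _)
      (fun i => st13_kerf_Sim2 (hUne i) (hUne 0) (by rw [hUe i, hUe 0]))
      hUne (hUne 0)
    rw [hconcat] at hcore
    exact hcore.1 hx
  set t := f (U 1) with ht
  have hreptU : ∀ m, st13_Sim2 f (U (m+1)) (st13_rep' f t) := by
    intro m
    have h1 : f (U (m+1)) = t := by rw [hUe m, ht, hUe 0]
    rw [← h1]
    exact st13_Sim2_symm (st13_rep'_spec f (hUne m))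
  set sseq := st13_sseq f x with hsseqdef
  have hsseq : ∀ p, st13_Sim1 f (st13_rep f (sseq p)) (st13_mseg (st13_letters x) 0 p) := by
    intro p
    induction p with
    | zero =>
      rw [st13_mseg_self]
      exact st13_rep_spec f ([] : List A)
    | succ p ih =>
      show st13_Sim1 f (st13_rep f (f (st13_rep f (sseq p) ++ [x p]))) _
      refine (st13_rep_spec f _).trans ?_
      rw [st13_mseg_succ _ (by omega : 0 ≤ p)]
      exact st13_Sim1_append ih (st13_Sim1_refl _)
  set q := st13_qseq f x β with hqdef
  have hq_succ : ∀ p, q (p+1) = if ∃ m, β m = p + 1 then none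
      else some (f ((match q p with
        | none => []
        | some r => st13_rep' f r) ++ [x p])) := fun p => rfl
  have hnotB : ∀ m p, β m < p → p < β (m+1) → ¬ ∃ k, β k = p := by
    rintro m p h1 h2 ⟨k, rfl⟩
    have hmk : m < k := hβmono.lt_iff_lt.1 h1
    have hkm : k < m + 1 := hβmono.lt_iff_lt.1 h2
    omega
  -- invariant inside blocks
  have hqblk : ∀ m j, β m + (j+1) < β (m+1) →
      ∃ r, q (β m + (j+1)) = some r ∧
        st13_Sim2 f (st13_rep' f r) (st13_mseg (st13_letters x) (β m) (β m + (j+1))) := by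
    intro m j
    induction j with
    | zero =>
      intro hlt
      have hB : ¬ ∃ k, β k = β m + 1 := hnotB m _ (by omega) (by omega)
      have hqm : q (β m) = none := st13_qseq_bdry f x (hβ1 m) ⟨m, rfl⟩
      refine ⟨f [x (β m)], ?_, ?_⟩
      · rw [show β m + (0+1) = (β m) + 1 by omega, hq_succ, if_neg hB, hqm]
        rfl
      · have hseg : st13_mseg (st13_letters x) (β m) (β m + (0+1)) = [x (β m)] := by
          rw [show β m + (0+1) = (β m) + 1 by omega, st13_mseg_succ _ (le_refl _),
            st13_mseg_self]
          rfl
        rw [hseg]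
        exact st13_rep'_spec f (by simp)
    | succ j ih =>
      intro hlt
      obtain ⟨r, hr, hsim⟩ := ih (by omega)
      have hB : ¬ ∃ k, β k = β m + (j+1) + 1 := hnotB m _ (by omega) (by omega)
      have hrne : st13_rep' f r ≠ [] :=
        st13_Sim2_ne (st13_Sim2_symm hsim) (st13_mseg_letters_ne x (by omega))
      refine ⟨f (st13_rep' f r ++ [x (β m + (j+1))]), ?_, ?_⟩
      · rw [show β m + (j+1+1) = (β m + (j+1)) + 1 by omega, hq_succ, if_neg hB, hr]
      · refine (st13_rep'_spec f (by simp)).trans ?_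
        rw [show β m + (j+1+1) = (β m + (j+1)) + 1 by omega,
          st13_mseg_succ _ (by omega)]
        exact st13_Sim2_append hsim (st13_Sim2_refl _)
  -- the run
  set ρ : ℕ → (st13_Auto f L).Q := fun p =>
    if p ≤ β 0 then Sum.inl (sseq p) else Sum.inr (t, q p) with hρ
  refine ⟨ρ, ?_, ?_, ?_⟩
  · show ρ 0 ∈ ({Sum.inl (f [])} : Set _)
    have : ρ 0 = Sum.inl (sseq 0) := by rw [hρ]; simp; rfl
    rw [this]
    rfl
  · intro p
    by_cases hp1 : p + 1 ≤ β 0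
    · -- phase 1 internal
      have e1 : ρ p = Sum.inl (sseq p) := by rw [hρ]; simp [show p ≤ β 0 by omega]; rfl
      have e2 : ρ (p+1) = Sum.inl (sseq (p+1)) := by rw [hρ]; simp [hp1]; rfl
      rw [e1, e2]
      exact Set.mem_union_left _ rfl
    · by_cases hp0 : p ≤ β 0
      · -- switch step: p = β 0
        obtain rfl : p = β 0 := by omega
        have e1 : ρ (β 0) = Sum.inl (sseq (β 0)) := by rw [hρ]; simp; rfl
        have e2 : ρ (β 0 + 1) = Sum.inr (t, q (β 0 + 1)) := by rw [hρ]; simp [hp1]; rfl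
        rw [e1, e2]
        refine Set.mem_union_right _ ⟨t, ?_, ?_⟩
        · exact ⟨U 0, U 1, st13_Sim1_symm (hsseq (β 0)), hreptU 0, hUne 0, hper⟩
        · by_cases hB : ∃ k, β k = β 0 + 1
          · right
            have hq1 : q (β 0 + 1) = none := st13_qseq_bdry f x (by omega) hB
            refine ⟨by rw [hq1], ?_⟩
            have hβ1eq : β 1 = β 0 + 1 := st13_bdry_succ hβmono rfl hB.choose_spec
            have hU1 : U 1 = [x (β 0)] := by
              rw [hUblk 0, hβ1eq, st13_mseg_succ _ (le_refl _), st13_mseg_self]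
              rfl
            have : f [x (β 0)] = t := by rw [ht, hU1]
            rw [← this]
            exact st13_Sim2_refl _
          · left
            have hq0 : q (β 0) = none := st13_qseq_bdry f x (hβ1 0) ⟨0, rfl⟩
            rw [hq_succ, if_neg hB, hq0]
            rfl
      · -- phase 2: p > β 0
        have hpgt : β 0 < p := by omega
        have e1 : ρ p = Sum.inr (t, q p) := by rw [hρ]; simp [show ¬ p ≤ β 0 by omega]; rfl
        have e2 : ρ (p+1) = Sum.inr (t, q (p+1)) := by rw [hρ]; simp [show ¬ p + 1 ≤ β 0 by omega]; rfl
        rw [e1, e2]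
        rcases hqv : q p with _ | r
        · -- q p = none ⇒ p is a boundary
          have hBp : ∃ m, β m = p := by
            by_contra hB
            obtain ⟨p', rfl⟩ : ∃ p', p = p' + 1 := ⟨p - 1, by omega⟩
            rw [hq_succ, if_neg hB] at hqv
            exact Option.some_ne_none _ hqv
          obtain ⟨m, hm⟩ := hBp
          by_cases hB : ∃ k, β k = p + 1
          · have hq1 : q (p + 1) = none := st13_qseq_bdry f x (by omega) hB
            rw [hq1]
            refine Set.mem_union_right _ ⟨rfl, ?_⟩
            have hβm1 : β (m+1) = p + 1 := st13_bdry_succ hβmono hm hB.choose_spec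
            have hUm : U (m+1) = [x p] := by
              rw [hUblk m, hβm1, hm, st13_mseg_succ _ (le_refl _), st13_mseg_self]
              rfl
            have hft : f [x p] = t := by rw [← hUm, hUe m, ht, hUe 0]
            rw [← hft]
            exact st13_Sim2_refl _
          · rw [hq_succ, if_neg hB, hqv]
            exact Set.mem_union_left _ rfl
        · -- q p = some r: inside a block
          have hnBp : ¬ ∃ m, β m = p := by
            rintro hB
            have hnone : q p = none := st13_qseq_bdry f x (by omega) hB
            rw [hqv] at hnone
            exact nomatch hnone
          obtain ⟨m, hm1, hm2⟩ := st13_locate hβmono hpgt hnBp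
          obtain ⟨r', hr', hsim⟩ := hqblk m (p - β m - 1)
            (by omega : β m + (p - β m - 1 + 1) < β (m+1))
          rw [show β m + (p - β m - 1 + 1) = p by omega] at hr' hsim
          rw [hqv] at hr'
          replace hr' := Option.some_injective _ hr'
          subst hr'
          have hrne : st13_rep' f r ≠ [] :=
            st13_Sim2_ne (st13_Sim2_symm hsim) (st13_mseg_letters_ne x (by omega))
          by_cases hB : ∃ k, β k = p + 1
          · have hq1 : q (p + 1) = none := st13_qseq_bdry f x (by omega) hB
            rw [hq1]
            refine Set.mem_union_right _ ⟨rfl, ?_⟩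
            have hβm1 : β (m+1) = p + 1 := st13_bdry_succ' hβmono hm1 hm2 hB.choose_spec
            refine (st13_rep'_spec f (by simp)).trans ?_
            have hchain : st13_Sim2 f (st13_rep' f r ++ [x p])
                (st13_mseg (st13_letters x) (β m) (β m + (p - β m)) ++ [x p]) := by
              rw [show β m + (p - β m) = p by omega]
              exact st13_Sim2_append hsim (st13_Sim2_refl _)
            refine hchain.trans ?_
            have hseg : st13_mseg (st13_letters x) (β m) (β m + (p - β m)) ++ [x p]
                = U (m+1) := by
              rw [show β m + (p - β m) = p by omega, hUblk m, hβm1,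
                st13_mseg_succ _ (by omega)]
              rfl
            rw [hseg]
            exact hreptU m
          · rw [hq_succ, if_neg hB, hqv]
            exact Set.mem_union_left _ rfl
  · intro n
    refine ⟨β (n+1), ?_, ?_⟩
    · have := hβmono.le_apply (x := n+1)
      omega
    · have hgt : ¬ β (n+1) ≤ β 0 := by
        have := hβmono (show 0 < n+1 by omega)
        omega
      have e1 : ρ (β (n+1)) = Sum.inr (t, q (β (n+1))) := by rw [hρ]; simp [hgt]; rfl
      have hq1 : q (β (n+1)) = none := st13_qseq_bdry f x (hβ1 _) ⟨n+1, rfl⟩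
      show ρ (β (n+1)) ∈ {q | ∃ t', q = Sum.inr (t', none)}
      rw [e1, hq1]
      exact ⟨t, rfl⟩

end ST13COMP

section ST13SND
variable {A : Type*} [Inhabited A] {N : ℕ}

theorem st13_sound {f : List A → Fin N} {L : Set (ℕ → A)} (H : st13_Hrec f L)
    {x : ℕ → A} (hA : (st13_Auto f L).Accepts x) : x ∈ L := by
  classical
  obtain ⟨ρ, hinit, hstep, hacc⟩ := hA
  have hinit' : ρ 0 = Sum.inl (f []) := hinit
  have hexP : ∃ p, ∃ tq : Fin N × Option (Fin N), ρ p = Sum.inr tq := by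
    obtain ⟨m, -, hm⟩ := hacc 0
    obtain ⟨t0, ht0⟩ := hm
    exact ⟨m, (t0, none), ht0⟩
  set ps := Nat.find hexP with hpsdef
  have hps := Nat.find_spec hexP
  have hinl : ∀ p, p < ps → ∃ s, ρ p = Sum.inl s := by
    intro p hp
    have := Nat.find_min hexP hp
    cases hq : ρ p with
    | inl s => exact ⟨s, rfl⟩
    | inr tq => exact absurd ⟨tq, hq⟩ this
  have hps_pos : 0 < ps := by
    rcases Nat.eq_zero_or_pos ps with h0 | h0
    · exfalso
      obtain ⟨tq, hto⟩ := hps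
      rw [← hpsdef, h0, hinit'] at hto
      exact nomatch hto
    · exact h0
  obtain ⟨⟨t, o0⟩, hpso⟩ := hps
  have htconst : ∀ p, ps ≤ p → ∃ o, ρ p = Sum.inr (t, o) := by
    intro p hp
    induction p, hp using Nat.le_induction with
    | base => exact ⟨o0, hpso⟩
    | succ p hp ih =>
      obtain ⟨o, ho⟩ := ih
      have hst := hstep p
      rw [ho] at hst
      cases o with
      | none =>
        rcases hst with h | ⟨h, -⟩
        · exact ⟨_, h⟩
        · exact ⟨_, h⟩
      | some r =>
        rcases hst with h | ⟨h, -⟩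
        · exact ⟨_, h⟩
        · exact ⟨_, h⟩
  have hph1 : ∀ p, p < ps → ∀ s, ρ p = Sum.inl s →
      st13_Sim1 f (st13_rep f s) (st13_mseg (st13_letters x) 0 p) := by
    intro p
    induction p with
    | zero =>
      intro _ s hs
      rw [hinit'] at hs
      obtain rfl : f [] = s := Sum.inl.inj hs
      rw [st13_mseg_self]
      exact st13_rep_spec f ([] : List A)
    | succ p ih =>
      intro hp s hs
      obtain ⟨s0, hs0⟩ := hinl p (by omega)
      have hih := ih (by omega) s0 hs0
      have hst := hstep p
      rw [hs0, hs] at hst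
      rcases hst with h | ⟨t', -, h | ⟨h, -⟩⟩
      · obtain rfl : s = f (st13_rep f s0 ++ [x p]) := Sum.inl.inj h
        refine (st13_rep_spec f _).trans ?_
        rw [st13_mseg_succ _ (by omega : 0 ≤ p)]
        exact st13_Sim1_append hih (st13_Sim1_refl _)
      · exact nomatch h
      · exact nomatch h
  obtain ⟨s0, hs0⟩ := hinl (ps - 1) (by omega)
  have hswitch := hstep (ps - 1)
  rw [hs0, show ps - 1 + 1 = ps by omega, hpso] at hswitch
  have hCond : st13_Cond f L s0 t := by
    rcases hswitch with h | ⟨t', hc, h | ⟨h, -⟩⟩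
    · exact nomatch h
    · obtain rfl : t = t' := congrArg Prod.fst (Sum.inr.inj h)
      exact hc
    · obtain rfl : t = t' := congrArg Prod.fst (Sum.inr.inj h)
      exact hc
  have hpre : st13_Sim1 f (st13_rep f s0) (st13_mseg (st13_letters x) 0 (ps - 1)) :=
    hph1 (ps - 1) (by omega) s0 hs0
  set V := {p : ℕ | ρ p = Sum.inr (t, none)} with hVdef
  have hVps : ∀ p, p ∈ V → ps ≤ p := by
    intro p hp
    have hp' : ρ p = Sum.inr (t, none) := hp
    by_contra hlt
    obtain ⟨s, hs⟩ := hinl p (by omega)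
    rw [hs] at hp'
    exact nomatch hp'
  have hVinf' : (setOf fun n => n ∈ V).Infinite := by
    change V.Infinite
    apply Set.infinite_of_forall_exists_gt
    intro a
    obtain ⟨m, hm1, hm2⟩ := hacc (a+1)
    obtain ⟨t', ht'⟩ := hm2
    have hmps : ps ≤ m := by
      by_contra hlt
      obtain ⟨s, hs⟩ := hinl m (by omega)
      rw [hs] at ht'
      exact nomatch ht'
    obtain ⟨o, ho⟩ := htconst m hmps
    rw [ho] at ht'
    have h2 : o = none := congrArg Prod.snd (Sum.inr.inj ht')
    rw [h2] at ho
    exact ⟨m, ho, by omega⟩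
  have hnthmem : ∀ j, Nat.nth (fun n => n ∈ V) j ∈ V := fun j =>
    Nat.nth_mem_of_infinite hVinf' j
  set b : ℕ → ℕ := fun i => match i with
    | 0 => ps - 1
    | (j+1) => Nat.nth (fun n => n ∈ V) j with hbdef
  have hbmono : StrictMono b := by
    apply strictMono_nat_of_lt_succ
    intro i
    cases i with
    | zero =>
      have := hVps _ (hnthmem 0)
      show ps - 1 < Nat.nth (fun n => n ∈ V) 0
      omega
    | succ j =>
      show Nat.nth (fun n => n ∈ V) j < Nat.nth (fun n => n ∈ V) (j+1)
      exact (Nat.nth_lt_nth hVinf').2 (by omega)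
  have hbV : ∀ i, ρ (b (i+1)) = Sum.inr (t, none) := fun i => hnthmem i
  have hbetween : ∀ i p, b i < p → p < b (i+1) → ρ p ≠ Sum.inr (t, none) := by
    intro i p h1 h2 hmem
    have hpV : p ∈ V := hmem
    have hpeq : Nat.nth (fun n => n ∈ V) (Nat.count (fun n => n ∈ V) p) = p :=
      Nat.nth_count hpV
    cases i with
    | zero =>
      have hlt : Nat.nth (fun n => n ∈ V) (Nat.count (fun n => n ∈ V) p)
          < Nat.nth (fun n => n ∈ V) 0 := by rw [hpeq]; exact h2
      have := (Nat.nth_lt_nth hVinf').1 hlt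
      omega
    | succ j =>
      have hlt1 : Nat.nth (fun n => n ∈ V) j
          < Nat.nth (fun n => n ∈ V) (Nat.count (fun n => n ∈ V) p) := by
        rw [hpeq]; exact h1
      have hlt2 : Nat.nth (fun n => n ∈ V) (Nat.count (fun n => n ∈ V) p)
          < Nat.nth (fun n => n ∈ V) (j+1) := by rw [hpeq]; exact h2
      have hj1 := (Nat.nth_lt_nth hVinf').1 hlt1
      have hj2 := (Nat.nth_lt_nth hVinf').1 hlt2
      omega
  -- segment invariant for partial blocks
  have hseg : ∀ q0, (q0 = ps - 1 ∨ ρ q0 = Sum.inr (t, none)) →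
      ∀ p, q0 + 1 ≤ p → (∀ j, q0 < j → j < p → ρ j ≠ Sum.inr (t, none)) →
      ∀ r, ρ p = Sum.inr (t, some r) →
        st13_Sim2 f (st13_rep' f r) (st13_mseg (st13_letters x) q0 p) := by
    intro q0 hq0 p hp
    induction p, hp using Nat.le_induction with
    | base =>
      intro _ r hr
      have hmseg : st13_mseg (st13_letters x) q0 (q0+1) = [x q0] := by
        rw [st13_mseg_succ _ (le_refl _), st13_mseg_self]
        rfl
      have hst := hstep q0
      rw [hr] at hst
      rcases hq0 with heq | hq0'
      · subst heq
        rw [hs0] at hst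
        rcases hst with h | ⟨t', -, h | ⟨h, -⟩⟩
        · exact nomatch h
        · obtain rfl : r = f [x (ps - 1)] :=
            Option.some.inj (congrArg Prod.snd (Sum.inr.inj h))
          rw [hmseg]
          exact st13_rep'_spec f (by simp)
        · exact nomatch (congrArg Prod.snd (Sum.inr.inj h))
      · rw [hq0'] at hst
        rcases hst with h | ⟨h, -⟩
        · obtain rfl : r = f [x q0] :=
            Option.some.inj (congrArg Prod.snd (Sum.inr.inj h))
          rw [hmseg]
          exact st13_rep'_spec f (by simp)
        · exact nomatch (congrArg Prod.snd (Sum.inr.inj h))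
    | succ p hp ih =>
      intro hnn r hr
      have hq0ps : ps ≤ p := by
        rcases hq0 with heq | hq0'
        · omega
        · have := hVps q0 hq0'
          omega
      obtain ⟨o, ho⟩ := htconst p hq0ps
      cases o with
      | none => exact absurd ho (hnn p (by omega) (by omega))
      | some r0 =>
        have hihs := ih (fun j hj1 hj2 => hnn j hj1 (by omega)) r0 ho
        have hst := hstep p
        rw [ho, hr] at hst
        rcases hst with h | ⟨h, -⟩
        · obtain rfl : r = f (st13_rep' f r0 ++ [x p]) :=
            Option.some.inj (congrArg Prod.snd (Sum.inr.inj h))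
          refine (st13_rep'_spec f (by simp)).trans ?_
          rw [st13_mseg_succ _ (by omega)]
          exact st13_Sim2_append hihs (st13_Sim2_refl _)
        · exact nomatch (congrArg Prod.snd (Sum.inr.inj h))
  -- full blocks
  have hblkD : ∀ q0, (q0 = ps - 1 ∨ ρ q0 = Sum.inr (t, none)) →
      ∀ p, q0 + 1 ≤ p → (∀ j, q0 < j → j < p → ρ j ≠ Sum.inr (t, none)) →
      ρ p = Sum.inr (t, none) →
        st13_Sim2 f (st13_mseg (st13_letters x) q0 p) (st13_rep' f t) := by
    intro q0 hq0 p hp hnn hrp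
    rcases Nat.eq_or_lt_of_le hp with heq | hlt
    · -- p = q0 + 1
      have hmseg : st13_mseg (st13_letters x) q0 (q0+1) = [x q0] := by
        rw [st13_mseg_succ _ (le_refl _), st13_mseg_self]
        rfl
      rw [← heq] at hrp
      have hst := hstep q0
      rw [hrp] at hst
      rw [← heq, hmseg]
      rcases hq0 with heq0 | hq0'
      · subst heq0
        rw [hs0] at hst
        rcases hst with h | ⟨t', -, h | ⟨h, hsim⟩⟩
        · exact nomatch h
        · exact nomatch (congrArg Prod.snd (Sum.inr.inj h))
        · obtain rfl : t = t' := congrArg Prod.fst (Sum.inr.inj h)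
          exact (st13_Sim2_symm (st13_rep'_spec f (by simp))).trans hsim
      · rw [hq0'] at hst
        rcases hst with h | ⟨-, hsim⟩
        · exact nomatch (congrArg Prod.snd (Sum.inr.inj h))
        · exact (st13_Sim2_symm (st13_rep'_spec f (by simp))).trans hsim
    · -- q0 + 1 < p
      obtain ⟨p0, rfl⟩ : ∃ p0, p = p0 + 1 := ⟨p - 1, by omega⟩
      have hq0ps : ps ≤ p0 := by
        rcases hq0 with heq0 | hq0'
        · omega
        · have := hVps q0 hq0'
          omega
      obtain ⟨o, ho⟩ := htconst p0 hq0ps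
      cases o with
      | none => exact absurd ho (hnn p0 (by omega) (by omega))
      | some r0 =>
        have hsegr := hseg q0 hq0 p0 (by omega) (fun j hj1 hj2 => hnn j hj1 (by omega)) r0 ho
        have hst := hstep p0
        rw [ho, hrp] at hst
        rcases hst with h | ⟨-, hsim2⟩
        · exact nomatch (congrArg Prod.snd (Sum.inr.inj h))
        · rw [st13_mseg_succ _ (by omega)]
          refine (st13_Sim2_append (st13_Sim2_symm hsegr) (st13_Sim2_refl [x p0])).trans ?_
          exact (st13_Sim2_symm (st13_rep'_spec f (by simp))).trans hsim2
  -- assemble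
  obtain ⟨uw, vw, hSuw, hSvw, hvwne, hLw⟩ := hCond
  have h0 : st13_Sim1 f (st13_blocksOf x b 0) uw := by
    show st13_Sim1 f (st13_mseg (st13_letters x) 0 (b 0)) uw
    exact (st13_Sim1_symm hpre).trans (st13_Sim1_symm hSuw)
  have hblocks : ∀ i, st13_Sim2 f (st13_blocksOf x b (i+1)) vw := by
    intro i
    show st13_Sim2 f (st13_mseg (st13_letters x) (b i) (b (i+1))) vw
    have hbnd : b i = ps - 1 ∨ ρ (b i) = Sum.inr (t, none) := by
      cases i with
      | zero => exact Or.inl rfl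
      | succ j => exact Or.inr (hbV j)
    have hD := hblkD (b i) hbnd (b (i+1)) (by have := hbmono (show i < i+1 by omega); omega)
      (fun j hj1 hj2 => hbetween i j hj1 hj2) (hbV i)
    exact hD.trans (st13_Sim2_symm hSvw)
  have hcore := st13_CORE H h0 hblocks (st13_blocksOf_ne x hbmono) hvwne
  rw [st13_blocksOf_concat x hbmono] at hcore
  exact hcore.2 hLw

end ST13SND

/-- Contrapositive of the congruence lemma: if `L` is not ω-regular then the kernel of
any function into a finite set fails to recognize `L`, witnessed by two pointwise
kernel-equivalent sequences whose concatenations disagree on membership in `L`. -/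
theorem statement13 [Inhabited A] {F : Type*} [Finite F] (L : Set (ℕ → A))
    (hL : ¬ OmegaRegular L) (f : List A → F) :
    ∃ u u' : ℕ → List A, InfOftenNonempty u ∧ InfOftenNonempty u' ∧
      (∀ i, f (u i) = f (u' i)) ∧ omegaConcat u ∈ L ∧ omegaConcat u' ∉ L := by
  classical
  obtain ⟨n, ⟨eqv⟩⟩ := Finite.exists_equiv_fin F
  set f' : List A → Fin n := fun w => eqv (f w) with hf'
  by_contra hcon
  push_neg at hcon
  have H : st13_Hrec f' L := by
    intro u u' hu hu' hpt
    have hpt' : ∀ i, f (u i) = f (u' i) := fun i => eqv.injective (hpt i)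
    exact ⟨fun h => hcon u u' hu hu' hpt' h,
      fun h => hcon u' u hu' hu (fun i => (hpt' i).symm) h⟩
  exact hL ⟨st13_Auto f' L, fun x =>
    ⟨fun hx => st13_complete H hx, fun hx => st13_sound H hx⟩⟩
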